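/- For all integers n ≥ 1 and 1 ≤ l ≤ n, the solution of the Partial Quicksort expectation recursion is given explicitly by a(n,l) = 2n + 2(n+1)·H_n − 2(n+3−l)·H_{n+1−l} − 6l + 6, where H_j = Σ_{i=1}^j 1/i is the j-th harmonic number. -/

import Mathlib

open MeasureTheory ProbabilityTheory Filter Finset

noncomputable section

/-- The `j`-th harmonic number `H_j = Σ_{i=1}^j 1/i`. -/
def Hnum (j : ℕ) : ℝ := ∑ i ∈ Finset.range j, (1 : ℝ) / (i + 1)

/-- The expected number `a(n,l)` of comparisons of Quicksort on the fly on `n`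
distinct reals up to the output of the `l`-th smallest, defined by the
divide-and-conquer recursion
`a(n,l) = n − 1 + (1/n)·[Σ_{j=1}^l (a(j−1,j−1) + a(n−j,l−j)) + Σ_{j=l+1}^n a(j−1,l)]`
for `n ≥ 2`, `1 ≤ l ≤ n`, and `0` at the boundary cases
(`a(0,0) = a(1,0) = a(1,1) = 0`, `a(n,0) = 0`). -/
def aPQ : ℕ → ℕ → ℝ
  | n, l =>
    if h : 2 ≤ n ∧ 1 ≤ l ∧ l ≤ n then
      (n : ℝ) - 1 + (1 / n) *
        ((∑ j ∈ (Finset.Icc 1 l).attach, (aPQ (j.1 - 1) (j.1 - 1) + aPQ (n - j.1) (l - j.1)))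
          + ∑ j ∈ (Finset.Icc (l + 1) n).attach, aPQ (j.1 - 1) l)
    else 0
termination_by n l => n
decreasing_by
  · have := (Finset.mem_Icc.mp j.2); omega
  · have := (Finset.mem_Icc.mp j.2); omega
  · have := (Finset.mem_Icc.mp j.2); omega

lemma Hnum_succ (k : ℕ) : Hnum (k + 1) = Hnum k + 1 / ((k : ℝ) + 1) := by
  simp [Hnum, Finset.sum_range_succ]

lemma Hnum_one : Hnum 1 = 1 := by simp [Hnum]

lemma sumid (k : ℕ) : ∑ i ∈ range k, (i : ℝ) = k * (k - 1) / 2 := by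
  induction k with
  | zero => simp
  | succ k ih => rw [Finset.sum_range_succ, ih]; push_cast; ring

lemma sumH1 (k : ℕ) :
    ∑ i ∈ range k, ((i : ℝ) + 1) * Hnum i
      = (k : ℝ) * (k + 1) / 2 * Hnum k - k * (k - 1) / 4 - k := by
  induction k with
  | zero => simp
  | succ k ih =>
    rw [Finset.sum_range_succ, ih, Hnum_succ]
    have h : ((k : ℝ) + 1) ≠ 0 := by positivity
    push_cast
    field_simp
    ring

lemma sumH3 (k : ℕ) :
    ∑ i ∈ range k, ((i : ℝ) + 3) * Hnum (i + 1)
      = ((k : ℝ) + 1) * ((k : ℝ) + 4) / 2 * Hnum (k + 1) - k * (k + 1) / 4 - 2 * (k + 1) := by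
  induction k with
  | zero => norm_num [Hnum_one]
  | succ k ih =>
    rw [Finset.sum_range_succ, ih, Hnum_succ (k + 1)]
    have h : ((k : ℝ) + 1 + 1) ≠ 0 := by positivity
    push_cast
    field_simp
    ring

lemma sum_shift (g : ℕ → ℝ) (a b : ℕ) :
    ∑ j ∈ range b, g (a + j) = (∑ i ∈ range (a + b), g i) - ∑ i ∈ range a, g i := by
  induction b with
  | zero => simp
  | succ b ih =>
    rw [Finset.sum_range_succ, ih, show a + (b + 1) = (a + b) + 1 from rfl,
      Finset.sum_range_succ]
    ring

lemma sum_lin (b : ℕ) (f g : ℕ → ℝ) (c d e : ℝ) :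
    ∑ i ∈ range b, (c * f i + d * g i + e)
      = c * (∑ i ∈ range b, f i) + d * (∑ i ∈ range b, g i) + b * e := by
  induction b with
  | zero => simp
  | succ b ih =>
    rw [Finset.sum_range_succ, ih, Finset.sum_range_succ, Finset.sum_range_succ]
    push_cast
    ring

/-- Closed form for `∑_{i<k} (i + (i+1)·H_i)`. -/
def phiSum (k : ℕ) : ℝ :=
  (k : ℝ) * (k - 1) / 2 + ((k : ℝ) * (k + 1) / 2 * Hnum k - k * (k - 1) / 4 - k)

lemma sumPhi (k : ℕ) :
    ∑ i ∈ range k, ((i : ℝ) + ((i : ℝ) + 1) * Hnum i) = phiSum k := by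
  rw [Finset.sum_add_distrib, sumid, sumH1, phiSum]

lemma aPQ_zero (n : ℕ) : aPQ n 0 = 0 := by
  rw [aPQ, dif_neg (by omega)]

lemma aPQ_closed : ∀ n l : ℕ, 1 ≤ l → l ≤ n →
    aPQ n l = 2 * n + 2 * ((n : ℝ) + 1) * Hnum n
      - 2 * ((n : ℝ) + 3 - l) * Hnum (n + 1 - l) - 6 * l + 6 := by
  intro n
  induction n using Nat.strong_induction_on with
  | _ n IH =>
  intro l hl hln
  by_cases h2 : 2 ≤ n
  · obtain ⟨m, rfl⟩ : ∃ m, n = l + m := ⟨n - l, by omega⟩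
    obtain ⟨lm, rfl⟩ : ∃ lm, l = lm + 1 := ⟨l - 1, by omega⟩
    -- rewrite the Hnum index on the RHS
    rw [show lm + 1 + m + 1 - (lm + 1) = m + 1 from by omega]
    rw [aPQ, dif_pos ⟨by omega, by omega, by omega⟩]
    rw [Finset.sum_attach (Finset.Icc 1 (lm + 1))
        (fun j => aPQ (j - 1) (j - 1) + aPQ (lm + 1 + m - j) (lm + 1 - j)),
      Finset.sum_attach (Finset.Icc (lm + 1 + 1) (lm + 1 + m)) (fun j => aPQ (j - 1) (lm + 1))]
    rw [← Finset.Ico_add_one_right_eq_Icc 1 (lm + 1), Finset.sum_Ico_eq_sum_range,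
      ← Finset.Ico_add_one_right_eq_Icc (lm + 1 + 1) (lm + 1 + m), Finset.sum_Ico_eq_sum_range]
    rw [show lm + 1 + 1 - 1 = lm + 1 from by omega,
      show lm + 1 + m + 1 - (lm + 1 + 1) = m from by omega]
    rw [Finset.sum_add_distrib]
    -- sum A : diagonal terms
    have hA1 : ∀ i ∈ range (lm + 1), aPQ (1 + i - 1) (1 + i - 1)
        = 2 * (((i : ℝ) + 1) * Hnum i) + (-4) * (i : ℝ) + 0 := by
      intro i hi
      simp only [Finset.mem_range] at hi
      rw [show 1 + i - 1 = i from by omega]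
      rcases Nat.eq_zero_or_pos i with h0 | h1
      · subst h0
        rw [aPQ, dif_neg (by omega)]
        simp [Hnum]
      · rw [IH i (by omega) i h1 le_rfl, show i + 1 - i = 1 from by omega, Hnum_one]
        ring
    have hA : ∑ i ∈ range (lm + 1), aPQ (1 + i - 1) (1 + i - 1)
        = 2 * (((lm + 1 : ℕ) : ℝ) * ((lm + 1 : ℕ) + 1) / 2 * Hnum (lm + 1)
            - ((lm + 1 : ℕ) : ℝ) * (((lm + 1 : ℕ) : ℝ) - 1) / 4 - ((lm + 1 : ℕ) : ℝ))
          + (-4) * (((lm + 1 : ℕ) : ℝ) * (((lm + 1 : ℕ) : ℝ) - 1) / 2)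
          + ((lm + 1 : ℕ) : ℝ) * 0 := by
      rw [Finset.sum_congr rfl hA1,
        sum_lin (lm + 1) (fun i => ((i : ℝ) + 1) * Hnum i) (fun i => (i : ℝ)) 2 (-4) 0,
        sumH1, sumid]
    -- sum B : the aPQ (n-j) (l-j) terms
    have hB1 : ∑ i ∈ range (lm + 1), aPQ (lm + 1 + m - (1 + i)) (lm + 1 - (1 + i))
        = ∑ i ∈ range (lm + 1), aPQ (m + i) i := by
      rw [← Finset.sum_range_reflect (fun i => aPQ (m + i) i) (lm + 1)]
      apply Finset.sum_congr rfl
      intro i hi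
      simp only [Finset.mem_range] at hi
      congr 1 <;> omega
    have hB3 : ∀ i ∈ range lm, aPQ (m + (i + 1)) (i + 1)
        = 2 * (((m + 1 + i : ℕ) : ℝ) + (((m + 1 + i : ℕ) : ℝ) + 1) * Hnum (m + 1 + i))
          + (-6) * (i : ℝ) + (-2 * ((m : ℝ) + 3) * Hnum (m + 1)) := by
      intro i hi
      simp only [Finset.mem_range] at hi
      rw [show m + (i + 1) = m + 1 + i from by omega,
        IH (m + 1 + i) (by omega) (i + 1) (by omega) (by omega),
        show m + 1 + i + 1 - (i + 1) = m + 1 from by omega]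
      push_cast
      ring
    have hB : ∑ i ∈ range lm, aPQ (m + (i + 1)) (i + 1)
        = 2 * (phiSum (lm + 1 + m) - phiSum (m + 1))
          + (-6) * ((lm : ℝ) * ((lm : ℝ) - 1) / 2)
          + (lm : ℝ) * (-2 * ((m : ℝ) + 3) * Hnum (m + 1)) := by
      rw [Finset.sum_congr rfl hB3,
        sum_lin lm
          (fun i => ((m + 1 + i : ℕ) : ℝ) + (((m + 1 + i : ℕ) : ℝ) + 1) * Hnum (m + 1 + i))
          (fun i => (i : ℝ)) 2 (-6) (-2 * ((m : ℝ) + 3) * Hnum (m + 1)),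
        sum_shift (fun i => ((i : ℝ) + ((i : ℝ) + 1) * Hnum i)) (m + 1) lm,
        show m + 1 + lm = lm + 1 + m from by omega, sumPhi, sumPhi, sumid]
    -- sum C : the aPQ (j-1) l terms
    have hC3 : ∀ i ∈ range m, aPQ (lm + 1 + 1 + i - 1) (lm + 1)
        = 2 * (((lm + 1 + i : ℕ) : ℝ) + (((lm + 1 + i : ℕ) : ℝ) + 1) * Hnum (lm + 1 + i))
          + (-2) * (((i : ℝ) + 3) * Hnum (i + 1)) + (-6 * (lm : ℝ)) := by
      intro i hi
      simp only [Finset.mem_range] at hi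
      rw [show lm + 1 + 1 + i - 1 = lm + 1 + i from by omega,
        IH (lm + 1 + i) (by omega) (lm + 1) (by omega) (by omega),
        show lm + 1 + i + 1 - (lm + 1) = i + 1 from by omega]
      push_cast
      ring
    have hC : ∑ i ∈ range m, aPQ (lm + 1 + 1 + i - 1) (lm + 1)
        = 2 * (phiSum (lm + 1 + m) - phiSum (lm + 1))
          + (-2) * (((m : ℝ) + 1) * ((m : ℝ) + 4) / 2 * Hnum (m + 1)
              - (m : ℝ) * ((m : ℝ) + 1) / 4 - 2 * ((m : ℝ) + 1))
          + (m : ℝ) * (-6 * (lm : ℝ)) := by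
      rw [Finset.sum_congr rfl hC3,
        sum_lin m
          (fun i => ((lm + 1 + i : ℕ) : ℝ) + (((lm + 1 + i : ℕ) : ℝ) + 1) * Hnum (lm + 1 + i))
          (fun i => ((i : ℝ) + 3) * Hnum (i + 1)) 2 (-2) (-6 * (lm : ℝ)),
        sum_shift (fun i => ((i : ℝ) + ((i : ℝ) + 1) * Hnum i)) (lm + 1) m,
        sumPhi, sumPhi, sumH3]
    rw [hA, hB1, Finset.sum_range_succ' (fun i => aPQ (m + i) i) lm]
    rw [show m + 0 = m from rfl, aPQ_zero, hB, hC]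
    have hn0 : ((lm : ℝ) + 1 + (m : ℝ)) ≠ 0 := by positivity
    simp only [phiSum]
    push_cast
    field_simp
    ring
  · have hn1 : n = 1 := by omega
    have hl1 : l = 1 := by omega
    subst hl1; subst hn1
    rw [aPQ, dif_neg (by omega)]
    norm_num [Hnum_one]

/-- For all integers `n ≥ 1` and `1 ≤ l ≤ n`, the solution of the
Partial Quicksort expectation recursion is given explicitly by
`a(n,l) = 2n + 2(n+1)·H_n − 2(n+3−l)·H_{n+1−l} − 6l + 6`. -/
theorem partialQuicksort_expected_cost (n l : ℕ) (hn : 1 ≤ n) (hl : 1 ≤ l) (hln : l ≤ n) :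
    aPQ n l = 2 * n + 2 * ((n : ℝ) + 1) * Hnum n
      - 2 * ((n : ℝ) + 3 - l) * Hnum (n + 1 - l) - 6 * l + 6 := by
  exact aPQ_closed n l hl hln

end
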